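/- For every natural number $n$, the identity of polynomials $x^n = \sum_{k=0}^{n} \Big( 2^{-2n}\,(2(n-k)+1)\, n! \sum_{0 \leq v \leq k,\; k-v \text{ even}} \frac{2^{v}}{(\tfrac{3}{2})_{\,n - (v+k)/2}\; v!\; ((k-v)/2)!} \Big) P_{n-k}(2x-1)$ holds in $\mathbb{R}[x]$. -/

import Mathlib

open Polynomial Finset Nat

noncomputable def legendreP (n : ℕ) : ℝ[X] :=
  ∑ k ∈ range (n / 2 + 1),
    C ((2 : ℝ) ^ (-(n : ℤ)) * (-1 : ℝ) ^ k * (n.choose k : ℝ) *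
       ((2 * n - 2 * k).choose n : ℝ)) * X ^ (n - 2 * k)

noncomputable def lc (n k : ℕ) : ℝ :=
  (2 : ℝ) ^ (-(n : ℤ)) * (-1 : ℝ) ^ k * (n.choose k : ℝ) * ((2 * n - 2 * k).choose n : ℝ)

lemma lc_eq_zero {n k : ℕ} (h : n + 1 ≤ 2 * k) : lc n k = 0 := by
  by_cases hk : k ≤ n
  · have : (2 * n - 2 * k).choose n = 0 := Nat.choose_eq_zero_of_lt (by omega)
    simp [lc, this]
  · have : n.choose k = 0 := Nat.choose_eq_zero_of_lt (by omega)
    simp [lc, this]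

lemma legendreP_eq (n N : ℕ) (h : n / 2 + 1 ≤ N) :
    legendreP n = ∑ k ∈ range N, C (lc n k) * X ^ (n - 2 * k) := by
  rw [legendreP]
  apply Finset.sum_subset (by simpa using h)
  intro k _ hk
  rw [mem_range, not_lt] at hk
  have : lc n k = 0 := lc_eq_zero (by omega)
  rw [show ((2 : ℝ) ^ (-(n : ℤ)) * (-1 : ℝ) ^ k * (n.choose k : ℝ) *
       ((2 * n - 2 * k).choose n : ℝ)) = lc n k from rfl, this]
  simp

lemma cb_cast (a : ℕ) :
    ((a:ℝ) + 1 + 1) * ((a+2).centralBinom : ℝ) = 2 * (2*(a:ℝ)+3) * ((a+1).centralBinom : ℝ) := by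
  have := Nat.succ_mul_centralBinom_succ (a+1)
  have : (((a+2) * (a+2).centralBinom : ℕ) : ℝ) = ((2 * (2*(a+1)+1) * (a+1).centralBinom : ℕ) : ℝ) := by
    rw [this]
  push_cast at this
  push_cast
  linarith

lemma zpow_shift (b : ℕ) (j : ℕ) :
    (2:ℝ) ^ (-((b + j : ℕ) : ℤ)) = (2:ℝ) ^ (-((b : ℕ) : ℤ)) / 2 ^ j := by
  rw [show -((b + j : ℕ) : ℤ) = -((b : ℕ) : ℤ) - (j : ℤ) by push_cast; ring,
    zpow_sub₀ (two_ne_zero), zpow_natCast]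

lemma lc_rec (m k : ℕ) :
    ((m:ℝ)+2) * lc (m+2) k + ((m:ℝ)+1) * (if k = 0 then 0 else lc m (k-1))
      = (2*(m:ℝ)+3) * lc (m+1) k := by
  rcases k with _ | a
  · -- k = 0
    simp only [if_pos rfl, mul_zero, add_zero, lc, pow_zero, Nat.choose_zero_right,
      Nat.cast_one, Nat.mul_zero, Nat.sub_zero, mul_one, one_mul]
    rw [show (2*(m+2)).choose (m+2) = (m+2).centralBinom from rfl,
      show (2*(m+1)).choose (m+1) = (m+1).centralBinom from rfl,
      show m + 2 = (m+1) + 1 from rfl, zpow_shift (m+1) 1]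
    have h := Nat.succ_mul_centralBinom_succ (m+1)
    have h2 : (((m+2) * (m+2).centralBinom : ℕ) : ℝ) = ((2 * (2*(m+1)+1) * (m+1).centralBinom : ℕ) : ℝ) := by rw [h]
    push_cast at h2
    rw [show ((m:ℕ)+1)+1 = m+2 from rfl]
    push_cast
    linear_combination ((2:ℝ) ^ (-((m:ℤ) + 1)) / 2) * h2
  · rcases Nat.lt_or_ge (2*(a+1)) (m+2) with hb | hb
    · -- generic case: 2*(a+1) ≤ m+1
      obtain ⟨u, rfl⟩ : ∃ u, m = 2*a+u+1 := ⟨m - (2*a+1), by omega⟩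
      simp only [lc, if_neg (Nat.succ_ne_zero a), Nat.add_sub_cancel]
      rw [show 2*(2*a+u+1+2) - 2*(a+1) = 2*a+2*u+4 by omega,
          show 2*(2*a+u+1) - 2*a = 2*a+2*u+2 by omega,
          show 2*(2*a+u+1+1) - 2*(a+1) = 2*a+2*u+2 by omega,
          Nat.cast_choose ℝ (show a+1 ≤ 2*a+u+3 by omega),
          Nat.cast_choose ℝ (show 2*a+u+3 ≤ 2*a+2*u+4 by omega),
          Nat.cast_choose ℝ (show a ≤ 2*a+u+1 by omega),
          Nat.cast_choose ℝ (show 2*a+u+1 ≤ 2*a+2*u+2 by omega),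
          Nat.cast_choose ℝ (show a+1 ≤ 2*a+u+2 by omega),
          Nat.cast_choose ℝ (show 2*a+u+2 ≤ 2*a+2*u+2 by omega),
          show 2*a+u+3 - (a+1) = a+u+2 by omega,
          show 2*a+2*u+4 - (2*a+u+3) = u+1 by omega,
          show 2*a+u+1 - a = a+u+1 by omega,
          show 2*a+2*u+2 - (2*a+u+1) = u+1 by omega,
          show 2*a+u+2 - (a+1) = a+u+1 by omega,
          show 2*a+2*u+2 - (2*a+u+2) = u by omega]
      rw [show (2*a+u+1+2 : ℕ) = (2*a+u+1) + 2 from rfl, zpow_shift (2*a+u+1) 2,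
          show (2*a+u+1+1 : ℕ) = (2*a+u+1) + 1 from rfl, zpow_shift (2*a+u+1) 1]
      rw [show (2*a+2*u+4)! = (2*a+2*u+4) * ((2*a+2*u+3) * (2*a+2*u+2)!) by
            rw [show (2*a+2*u+4) = (2*a+2*u+3)+1 from rfl, Nat.factorial_succ,
                show (2*a+2*u+3) = (2*a+2*u+2)+1 from rfl, Nat.factorial_succ],
          show (2*a+u+3)! = (2*a+u+3) * ((2*a+u+2) * (2*a+u+1)!) by
            rw [show (2*a+u+3) = (2*a+u+2)+1 from rfl, Nat.factorial_succ,
                show (2*a+u+2) = (2*a+u+1)+1 from rfl, Nat.factorial_succ],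
          show (2*a+u+2)! = (2*a+u+2) * (2*a+u+1)! by
            rw [show (2*a+u+2) = (2*a+u+1)+1 from rfl, Nat.factorial_succ],
          show (a+u+2)! = (a+u+2) * (a+u+1)! by
            rw [show (a+u+2) = (a+u+1)+1 from rfl, Nat.factorial_succ],
          show (a+1)! = (a+1) * (a !) from Nat.factorial_succ a,
          show (u+1)! = (u+1) * (u !) from Nat.factorial_succ u,
          pow_succ]
      have hf : ∀ x : ℕ, ((x)! : ℝ) ≠ 0 := fun x => Nat.cast_ne_zero.mpr (Nat.factorial_ne_zero x)
      have hz : (2:ℝ) ^ (-((2*a+u+1 : ℕ) : ℤ)) ≠ 0 := zpow_ne_zero _ two_ne_zero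
      push_cast
      field_simp
      ring
    · rcases Nat.lt_or_ge (2*(a+1)) (m+3) with hc | hc
      · -- boundary: 2*(a+1) = m+2, m = 2a
        obtain rfl : m = 2*a := by omega
        have h1 : lc (2*a+1) (a+1) = 0 := lc_eq_zero (by omega)
        rw [show (2*a:ℕ)+1 = 2*a+1 from rfl, h1, mul_zero]
        simp only [if_neg (Nat.succ_ne_zero a), Nat.add_sub_cancel, lc]
        rw [show 2*(2*a+2) - 2*(a+1) = 2*(a+1) by omega,
            show 2*(2*a) - 2*a = 2*a by omega,
            show (2*(a+1)).choose (2*a+2) = 1 by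
              rw [show 2*(a+1) = 2*a+2 by omega]; exact Nat.choose_self _,
            show (2*a).choose (2*a) = 1 from Nat.choose_self _,
            show (2*a+2).choose (a+1) = (a+1).centralBinom by
              rw [show 2*a+2 = 2*(a+1) by omega]; rfl,
            show (2*a).choose a = a.centralBinom by rw [Nat.centralBinom],
            zpow_shift (2*a) 2, pow_succ]
        have h := Nat.succ_mul_centralBinom_succ a
        have h2 : (((a+1) * (a+1).centralBinom : ℕ) : ℝ) = ((2 * (2*a+1) * a.centralBinom : ℕ) : ℝ) := by rw [h]
        push_cast at h2
        push_cast
        linear_combination (-((-1:ℝ)^a) * (2:ℝ) ^ (-(2*(a:ℤ))) / 2) * h2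
      · -- all vanish
        have h1 : lc (m+2) (a+1) = 0 := lc_eq_zero (by omega)
        have h2 : lc (m+1) (a+1) = 0 := lc_eq_zero (by omega)
        have h3 : lc m a = 0 := lc_eq_zero (by omega)
        simp [h1, h2, h3]

lemma legendre_rec (m : ℕ) :
    ((m:ℝ)+2) • legendreP (m+2) + ((m:ℝ)+1) • legendreP m
      = C (2*(m:ℝ)+3) * (X * legendreP (m+1)) := by
  rw [legendreP_eq (m+2) (m/2+3) (by omega), legendreP_eq (m+1) (m/2+3) (by omega),
      legendreP_eq m (m/2+2) (by omega)]
  simp only [Finset.mul_sum, Finset.smul_sum]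
  have hre : ∑ k ∈ range (m/2+2), ((m:ℝ)+1) • (C (lc m k) * X ^ (m - 2*k))
      = ∑ k ∈ range (m/2+3), (C (((m:ℝ)+1) * (if k = 0 then 0 else lc m (k-1))) * X ^ (m+2 - 2*k)) := by
    conv_rhs => rw [Finset.sum_range_succ']
    simp only [if_neg (Nat.succ_ne_zero _), ite_true, eq_self_iff_true, Nat.add_sub_cancel,
      mul_zero, map_zero, zero_mul, add_zero]
    apply Finset.sum_congr rfl
    intro k _
    rw [show m+2-2*(k+1) = m - 2*k by omega, smul_eq_C_mul, ← mul_assoc, ← C_mul]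
  rw [hre, ← Finset.sum_add_distrib]
  apply Finset.sum_congr rfl
  intro k _
  rw [smul_eq_C_mul, ← mul_assoc, ← C_mul, ← add_mul, ← C_add, lc_rec m k, C_mul]
  by_cases h2k : 2*k ≤ m+1
  · rw [show m+2-2*k = (m+1-2*k)+1 by omega, pow_succ]
    ring
  · rw [lc_eq_zero (show m+1+1 ≤ 2*k by omega)]
    simp

noncomputable def aa (m k j : ℕ) : ℝ :=
  ((m+j)! : ℝ) / (((2*m+2*j+1)! : ℝ) * ((k - 2*j)! : ℝ) * ((j)! : ℝ))

lemma fact_cast_ne (x : ℕ) : ((x)! : ℝ) ≠ 0 := Nat.cast_ne_zero.mpr (Nat.factorial_ne_zero x)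

lemma poch_eval (m : ℕ) :
    (ascPochhammer ℝ m).eval (3/2 : ℝ) = ((2*m+1)! : ℝ) / (4^m * ((m)! : ℝ)) := by
  induction m with
  | zero => simp
  | succ m ih =>
    rw [ascPochhammer_succ_right, eval_mul, ih]
    rw [show 2*(m+1)+1 = 2*m+3 by omega,
      show (2*m+3)! = (2*m+3)*((2*m+2)*((2*m+1)!)) by
        rw [show 2*m+3 = (2*m+2)+1 from rfl, Nat.factorial_succ,
            show 2*m+2 = (2*m+1)+1 from rfl, Nat.factorial_succ],
      Nat.factorial_succ m, pow_succ]
    simp only [eval_add, eval_X, eval_natCast]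
    have h1 := fact_cast_ne m
    have h2 := fact_cast_ne (2*m+1)
    push_cast
    field_simp
    ring

lemma Hlem (m k j : ℕ) (h : 2*j+1 ≤ k) :
    ((k:ℝ)+1)*(2*(m:ℝ)+(k:ℝ)+2) * aa m (k+1) j - 2*((m:ℝ)+(k:ℝ)+1) * aa m k j
      = 2*(j:ℝ)*(2*(m:ℝ)+2*(j:ℝ)+1) * aa m (k+1) j
        - 2*((j:ℝ)+1)*(2*(m:ℝ)+2*(j:ℝ)+3) * aa m (k+1) (j+1) := by
  obtain ⟨r, rfl⟩ : ∃ r, k = 2*j+1+r := ⟨k - (2*j+1), by omega⟩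
  simp only [aa]
  rw [show 2*j+1+r+1 - 2*j = r+2 by omega, show 2*j+1+r - 2*j = r+1 by omega,
      show 2*j+1+r+1 - 2*(j+1) = r by omega,
      show m+(j+1) = m+j+1 by omega, show 2*m+2*(j+1)+1 = 2*m+2*j+3 by omega,
      Nat.factorial_succ (m+j),
      show (2*m+2*j+3)! = (2*m+2*j+3)*((2*m+2*j+2)*((2*m+2*j+1)!)) by
        rw [show 2*m+2*j+3 = (2*m+2*j+2)+1 from rfl, Nat.factorial_succ,
            show 2*m+2*j+2 = (2*m+2*j+1)+1 from rfl, Nat.factorial_succ],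
      show (r+2)! = (r+2)*((r+1)*(r !)) by
        rw [show r+2 = (r+1)+1 from rfl, Nat.factorial_succ, Nat.factorial_succ],
      Nat.factorial_succ r, Nat.factorial_succ j]
  have h1 := fact_cast_ne (m+j)
  have h2 := fact_cast_ne (2*m+2*j+1)
  have h3 := fact_cast_ne r
  have h4 := fact_cast_ne j
  push_cast
  field_simp
  ring

lemma Htop (m s : ℕ) :
    ((2*(s:ℝ))+1)*(2*(m:ℝ)+2*(s:ℝ)+2) * aa m (2*s+1) s - 2*((m:ℝ)+2*(s:ℝ)+1) * aa m (2*s) s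
      = 2*(s:ℝ)*(2*(m:ℝ)+2*(s:ℝ)+1) * aa m (2*s+1) s := by
  simp only [aa]
  rw [show 2*s+1 - 2*s = 1 by omega, show 2*s - 2*s = 0 by omega]
  simp only [Nat.factorial_one, Nat.factorial_zero, Nat.cast_one]
  have h1 := fact_cast_ne (m+s)
  have h2 := fact_cast_ne (2*m+2*s+1)
  have h3 := fact_cast_ne s
  field_simp
  ring

lemma Ilem (m k : ℕ) :
    ∑ j ∈ range (k/2+1), aa m k j
      = 2^k * ((m+k)! : ℝ) / (((k)! : ℝ) * ((2*m+k+1)! : ℝ)) := by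
  induction k with
  | zero =>
    simp only [Nat.zero_div, zero_add, range_one, sum_singleton, aa, pow_zero, one_mul]
    norm_num
  | succ k ih =>
    have key : ((k:ℝ)+1)*(2*(m:ℝ)+(k:ℝ)+2) * (∑ j ∈ range ((k+1)/2+1), aa m (k+1) j)
        = 2*((m:ℝ)+(k:ℝ)+1) * (∑ j ∈ range (k/2+1), aa m k j) := by
      rcases Nat.even_or_odd k with hk | hk
      · obtain ⟨s, rfl⟩ := hk
        rw [show (s+s+1)/2+1 = s+1 by omega, show (s+s)/2+1 = s+1 by omega]
        rw [Finset.mul_sum, Finset.mul_sum, ← sub_eq_zero, ← Finset.sum_sub_distrib]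
        have hsplit := Finset.sum_range_succ (fun j =>
          ((s:ℝ)+(s:ℝ)+1)*(2*(m:ℝ)+((s:ℝ)+(s:ℝ))+2) * aa m (s+s+1) j
            - 2*((m:ℝ)+((s:ℝ)+(s:ℝ))+1) * aa m (s+s) j) s
        rw [show ((s+s:ℕ):ℝ) = (s:ℝ)+(s:ℝ) by push_cast; ring] at *
        rw [hsplit]
        have htel : ∑ j ∈ range s,
            (((s:ℝ)+(s:ℝ)+1)*(2*(m:ℝ)+((s:ℝ)+(s:ℝ))+2) * aa m (s+s+1) j
              - 2*((m:ℝ)+((s:ℝ)+(s:ℝ))+1) * aa m (s+s) j)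
            = ∑ j ∈ range s,
              ((fun (j:ℕ) => -(2*(j:ℝ)*(2*(m:ℝ)+2*(j:ℝ)+1) * aa m (s+s+1) j)) (j+1)
                - (fun (j:ℕ) => -(2*(j:ℝ)*(2*(m:ℝ)+2*(j:ℝ)+1) * aa m (s+s+1) j)) j) := by
          apply Finset.sum_congr rfl
          intro j hj
          rw [mem_range] at hj
          have h := Hlem m (s+s) j (by omega)
          rw [show ((s+s:ℕ):ℝ) = (s:ℝ)+(s:ℝ) by push_cast; ring] at h
          push_cast at h ⊢
          linarith [h]
        rw [htel, Finset.sum_range_sub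
          (fun (j:ℕ) => -(2*(j:ℝ)*(2*(m:ℝ)+2*(j:ℝ)+1) * aa m (s+s+1) j))]
        have h := Htop m s
        push_cast at h ⊢
        rw [show 2*s = s+s by omega] at h
        nlinarith [h]
      · obtain ⟨s, rfl⟩ := hk
        rw [show (2*s+1+1)/2+1 = s+2 by omega, show (2*s+1)/2+1 = s+1 by omega]
        rw [Finset.sum_range_succ, mul_add, Finset.mul_sum, Finset.mul_sum, ← sub_eq_zero]
        have htel : ∑ j ∈ range (s+1),
            ((((2*s+1:ℕ):ℝ)+1)*(2*(m:ℝ)+((2*s+1:ℕ):ℝ)+2) * aa m (2*s+1+1) j)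
            - ∑ j ∈ range (s+1), (2*((m:ℝ)+((2*s+1:ℕ):ℝ)+1) * aa m (2*s+1) j)
            = -(2*((s:ℝ)+1)*(2*(m:ℝ)+2*((s:ℝ)+1)+1) * aa m (2*s+1+1) (s+1)) := by
          rw [← Finset.sum_sub_distrib]
          have htel2 : ∑ j ∈ range (s+1),
              ((((2*s+1:ℕ):ℝ)+1)*(2*(m:ℝ)+((2*s+1:ℕ):ℝ)+2) * aa m (2*s+1+1) j
                - 2*((m:ℝ)+((2*s+1:ℕ):ℝ)+1) * aa m (2*s+1) j)
              = ∑ j ∈ range (s+1),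
                ((fun (j:ℕ) => -(2*(j:ℝ)*(2*(m:ℝ)+2*(j:ℝ)+1) * aa m (2*s+1+1) j)) (j+1)
                  - (fun (j:ℕ) => -(2*(j:ℝ)*(2*(m:ℝ)+2*(j:ℝ)+1) * aa m (2*s+1+1) j)) j) := by
            apply Finset.sum_congr rfl
            intro j hj
            rw [mem_range] at hj
            have h := Hlem m (2*s+1) j (by omega)
            push_cast at h ⊢
            linarith [h]
          rw [htel2, Finset.sum_range_sub
            (fun (j:ℕ) => -(2*(j:ℝ)*(2*(m:ℝ)+2*(j:ℝ)+1) * aa m (2*s+1+1) j))]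
          push_cast
          ring
        push_cast at htel ⊢
        linarith [htel]
    -- conclude from key and ih
    rw [ih] at key
    have h2 : ((k:ℝ)+1)*(2*(m:ℝ)+(k:ℝ)+2) ≠ 0 := by positivity
    apply mul_left_cancel₀ h2
    rw [key]
    rw [show m+(k+1) = (m+k)+1 by omega, Nat.factorial_succ (m+k),
        Nat.factorial_succ k,
        show 2*m+(k+1)+1 = (2*m+k+1)+1 by omega, Nat.factorial_succ (2*m+k+1),
        pow_succ]
    have h3 := fact_cast_ne (m+k)
    have h4 := fact_cast_ne k
    have h5 := fact_cast_ne (2*m+k+1)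
    push_cast
    field_simp
    ring

lemma sumv (n k : ℕ) (h : k ≤ n) :
    ∑ v ∈ (range (k + 1)).filter (fun v => (k - v) % 2 = 0),
        (2 : ℝ) ^ v /
          ((ascPochhammer ℝ (n - (v + k) / 2)).eval (3 / 2 : ℝ) * (v)! * ((k - v) / 2)!)
      = 2^(2*n) * ((n)! : ℝ) / (((k)! : ℝ) * ((2*n - k + 1)! : ℝ)) := by
  obtain ⟨m, rfl⟩ : ∃ m, n = m + k := ⟨n - k, by omega⟩
  have hstep : ∑ v ∈ (range (k + 1)).filter (fun v => (k - v) % 2 = 0),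
      (2 : ℝ) ^ v /
        ((ascPochhammer ℝ (m + k - (v + k) / 2)).eval (3 / 2 : ℝ) * (v)! * ((k - v) / 2)!)
      = ∑ j ∈ range (k/2+1), 2^(2*(m+k)) / 2^k * aa m k j := by
    apply Finset.sum_nbij' (fun v => (k - v)/2) (fun j => k - 2*j)
    · intro v hv
      simp only [mem_filter, mem_range] at hv
      rw [mem_range]
      omega
    · intro j hj
      rw [mem_range] at hj
      simp only [mem_filter, mem_range]
      omega
    · intro v hv
      simp only [mem_filter, mem_range] at hv
      omega
    · intro j hj
      rw [mem_range] at hj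
      omega
    · intro v hv
      simp only [mem_filter, mem_range] at hv
      rw [show m + k - (v + k)/2 = m + (k-v)/2 by omega]
      rw [poch_eval, aa]
      rw [show k - 2*((k-v)/2) = v by omega,
          show 2*m+2*((k-v)/2)+1 = 2*(m+(k-v)/2)+1 by omega]
      have h1 := fact_cast_ne (m+(k-v)/2)
      have h2 := fact_cast_ne (2*(m+(k-v)/2)+1)
      have h3 := fact_cast_ne v
      have h4 := fact_cast_ne ((k-v)/2)
      have hw : k - v = 2*((k-v)/2) := by omega
      field_simp
      rw [show (4:ℝ) = 2^2 by norm_num, ← pow_mul,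
        show 2*(m+k) = v + 2*(m+(k-v)/2) + k by omega, pow_add, pow_add]
  rw [hstep, ← Finset.mul_sum, Ilem]
  rw [show 2*(m+k) - k + 1 = 2*m+k+1 by omega, show m+k = m+k from rfl]
  have h4 := fact_cast_ne k
  have h5 := fact_cast_ne (2*m+k+1)
  have h6 : (2:ℝ)^k ≠ 0 := by positivity
  field_simp

noncomputable def Qp (m : ℕ) : ℝ[X] := (legendreP m).comp (2*X - 1)

noncomputable def cc (n m : ℕ) : ℝ :=
  if m ≤ n then (2*(m:ℝ)+1) * ((n)! : ℝ) * ((n)! : ℝ) / (((n-m)! : ℝ) * ((n+m+1)! : ℝ)) else 0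

noncomputable def dd (n m : ℕ) : ℝ := cc n m / (2*(2*(m:ℝ)+1))

lemma legendreP_zero : legendreP 0 = 1 := by
  simp [legendreP]

lemma legendreP_one : legendreP 1 = X := by
  rw [legendreP]
  norm_num
  rw [← map_ofNat C 2, ← C_mul]
  norm_num

lemma Qp_zero : Qp 0 = 1 := by simp [Qp, legendreP_zero]

lemma Qp_one : Qp 1 = 2*X - 1 := by simp [Qp, legendreP_one]

lemma xQ (m : ℕ) : C (2*(2*(m:ℝ)+1)) * (X * Qp m)
    = C ((m:ℝ)+1) * Qp (m+1) + C (2*(m:ℝ)+1) * Qp m + C ((m:ℝ)) * Qp (m-1) := by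
  rcases m with _ | m'
  · rw [show (0:ℕ)+1 = 1 from rfl, show (0:ℕ)-1 = 0 from rfl, Qp_zero, Qp_one]
    norm_num
    simp only [map_ofNat]
  · have hrec := congrArg (fun p : ℝ[X] => p.comp (2*X - 1)) (legendre_rec m')
    simp only [add_comp, smul_comp, mul_comp, C_comp, X_comp] at hrec
    rw [show ((m'+1:ℕ):ℝ) = (m':ℝ)+1 by push_cast; ring, show (m'+1)-1 = m' from rfl,
        show m'+1+1 = m'+2 from rfl]
    have h0 : (legendreP (m'+2)).comp (2*X-1) = Qp (m'+2) := rfl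
    have h1 : (legendreP (m'+1)).comp (2*X-1) = Qp (m'+1) := rfl
    have h2 : (legendreP m').comp (2*X-1) = Qp m' := rfl
    rw [h0, h1, h2] at hrec
    rw [smul_eq_C_mul, smul_eq_C_mul] at hrec
    simp only [map_add, map_mul, map_one, map_ofNat] at hrec ⊢
    linear_combination -hrec

lemma cc_succ (n m : ℕ) (hm : m ≤ n+1) :
    (m:ℝ) * dd n (m-1) + (2*(m:ℝ)+1) * dd n m + ((m:ℝ)+1) * dd n (m+1) = cc (n+1) m := by
  rcases Nat.lt_or_ge m (n+1) with hlt | hge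
  · -- m ≤ n
    rcases Nat.lt_or_ge m n with hlt2 | hge2
    · -- m ≤ n - 1
      rcases m with _ | a
      · -- m = 0, n ≥ 1
        obtain ⟨b, rfl⟩ : ∃ b, n = b+1 := ⟨n-1, by omega⟩
        simp only [dd, cc, Nat.cast_zero, Nat.zero_sub, zero_mul, zero_add, Nat.cast_one,
          if_pos (show (0:ℕ) ≤ b+1 by omega), if_pos (show (1:ℕ) ≤ b+1 by omega),
          if_pos (show (0:ℕ) ≤ b+1+1 by omega)]
        rw [show b+1-0 = b+1 by omega, show b+1+0+1 = b+2 by omega,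
            show b+1-1 = b by omega, show b+1+1+1 = b+3 by omega,
            show b+1+1-0 = b+2 by omega, show b+1+1+0+1 = b+3 by omega]
        rw [show (b+3)! = (b+3)*((b+2)*((b+1)!)) by
              rw [show b+3 = (b+2)+1 from rfl, Nat.factorial_succ,
                  show b+2 = (b+1)+1 from rfl, Nat.factorial_succ],
            show (b+2)! = (b+2)*((b+1)!) by
              rw [show b+2 = (b+1)+1 from rfl, Nat.factorial_succ],
            show (b+1)! = (b+1)*(b !) from Nat.factorial_succ b]
        have h1 := fact_cast_ne b
        push_cast
        field_simp
        ring
      · -- m = a+1, 1 ≤ m ≤ n-1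
        obtain ⟨b, rfl⟩ : ∃ b, n = a+b+2 := ⟨n-a-2, by omega⟩
        simp only [dd, cc, if_pos (show a ≤ a+b+2 by omega),
          if_pos (show a+1 ≤ a+b+2 by omega), if_pos (show a+1+1 ≤ a+b+2 by omega),
          if_pos (show a+1 ≤ a+b+2+1 by omega), Nat.add_sub_cancel]
        rw [show a+b+2-a = b+2 by omega, show a+b+2+a+1 = 2*a+b+3 by omega,
            show a+b+2-(a+1) = b+1 by omega, show a+b+2+(a+1)+1 = 2*a+b+4 by omega,
            show a+b+2-(a+1+1) = b by omega, show a+b+2+(a+1+1)+1 = 2*a+b+5 by omega,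
            show a+b+2+1-(a+1) = b+2 by omega, show a+b+2+1+(a+1)+1 = 2*a+b+5 by omega,
            show a+b+2+1 = a+b+3 from rfl]
        rw [show (2*a+b+5)! = (2*a+b+5)*((2*a+b+4)*((2*a+b+3)!)) by
              rw [show 2*a+b+5 = (2*a+b+4)+1 from rfl, Nat.factorial_succ,
                  show 2*a+b+4 = (2*a+b+3)+1 from rfl, Nat.factorial_succ],
            show (2*a+b+4)! = (2*a+b+4)*((2*a+b+3)!) by
              rw [show 2*a+b+4 = (2*a+b+3)+1 from rfl, Nat.factorial_succ],
            show (a+b+3)! = (a+b+3)*((a+b+2)!) from Nat.factorial_succ (a+b+2),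
            show (b+2)! = (b+2)*((b+1)*(b !)) by
              rw [show b+2 = (b+1)+1 from rfl, Nat.factorial_succ, Nat.factorial_succ],
            show (b+1)! = (b+1)*(b !) from Nat.factorial_succ b]
        have h1 := fact_cast_ne b
        have h2 := fact_cast_ne (a+b+2)
        have h3 := fact_cast_ne (2*a+b+3)
        push_cast
        field_simp
        ring
    · -- m = n
      obtain rfl : m = n := by omega
      rcases m with _ | a
      · -- m = n = 0
        norm_num [dd, cc]
      · -- m = n = a+1
        simp only [dd, cc, if_pos (show a ≤ a+1 by omega), if_pos (le_refl (a+1)),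
          if_neg (show ¬ a+1+1 ≤ a+1 by omega), if_pos (show a+1 ≤ a+1+1 by omega),
          Nat.add_sub_cancel]
        rw [show a+1-a = 1 by omega, show a+1+a+1 = 2*a+2 by omega,
            show a+1-(a+1) = 0 by omega, show a+1+(a+1)+1 = 2*a+3 by omega,
            show a+1+1-(a+1) = 1 by omega, show a+1+1+(a+1)+1 = 2*a+4 by omega,
            show a+1+1 = a+2 from rfl]
        rw [show (2*a+4)! = (2*a+4)*((2*a+3)*((2*a+2)!)) by
              rw [show 2*a+4 = (2*a+3)+1 from rfl, Nat.factorial_succ,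
                  show 2*a+3 = (2*a+2)+1 from rfl, Nat.factorial_succ],
            show (2*a+3)! = (2*a+3)*((2*a+2)!) by
              rw [show 2*a+3 = (2*a+2)+1 from rfl, Nat.factorial_succ],
            show (a+2)! = (a+2)*((a+1)!) from Nat.factorial_succ (a+1)]
        have h1 := fact_cast_ne (a+1)
        have h2 := fact_cast_ne (2*a+2)
        push_cast
        norm_num [Nat.factorial]
        field_simp
        ring
  · -- m = n+1
    obtain rfl : m = n+1 := by omega
    simp only [dd, cc, Nat.add_sub_cancel, if_pos (le_refl n), if_pos (le_refl (n+1)),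
      if_neg (show ¬ n+1 ≤ n by omega), if_neg (show ¬ n+1+1 ≤ n by omega),
      if_neg (show ¬ n+1+1 ≤ n+1 by omega)]
    rw [show n-n = 0 by omega, show n+n+1 = 2*n+1 by omega,
        show n+1-(n+1) = 0 by omega, show n+1+(n+1)+1 = 2*n+3 by omega]
    rw [show (2*n+3)! = (2*n+3)*((2*n+2)*((2*n+1)!)) by
          rw [show 2*n+3 = (2*n+2)+1 from rfl, Nat.factorial_succ,
              show 2*n+2 = (2*n+1)+1 from rfl, Nat.factorial_succ],
        show (n+1)! = (n+1)*(n !) from Nat.factorial_succ n]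
    have h1 := fact_cast_ne n
    have h2 := fact_cast_ne (2*n+1)
    push_cast
    norm_num [Nat.factorial]
    field_simp
    ring

theorem main_expansion (n : ℕ) : (X:ℝ[X])^n = ∑ m ∈ range (n+1), C (cc n m) * Qp m := by
  induction n with
  | zero =>
    rw [range_one, Finset.sum_singleton]
    norm_num [cc, Qp_zero]
  | succ n ih =>
    rw [pow_succ, ih, Finset.sum_mul]
    have hterm : ∀ m : ℕ, C (cc n m) * Qp m * X
        = C (dd n m * ((m:ℝ)+1)) * Qp (m+1) + C (dd n m * (2*(m:ℝ)+1)) * Qp m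
          + C (dd n m * (m:ℝ)) * Qp (m-1) := by
      intro m
      have h2 : (2*(2*(m:ℝ)+1)) ≠ 0 := by positivity
      have h1 : cc n m = dd n m * (2*(2*(m:ℝ)+1)) := by rw [dd]; field_simp
      calc C (cc n m) * Qp m * X
          = C (dd n m) * (C (2*(2*(m:ℝ)+1)) * (X * Qp m)) := by
            rw [h1, C_mul]; ring
        _ = C (dd n m) * (C ((m:ℝ)+1) * Qp (m+1) + C (2*(m:ℝ)+1) * Qp m
              + C ((m:ℝ)) * Qp (m-1)) := by rw [xQ m]
        _ = _ := by
            rw [mul_add, mul_add, ← mul_assoc, ← mul_assoc, ← mul_assoc,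
              ← C_mul, ← C_mul, ← C_mul]
    simp only [hterm]
    rw [Finset.sum_add_distrib, Finset.sum_add_distrib]
    have hS1 : ∑ m ∈ range (n+1), C (dd n m * ((m:ℝ)+1)) * Qp (m+1)
        = ∑ m ∈ range (n+2), C (dd n (m-1) * (m:ℝ)) * Qp m := by
      rw [Finset.sum_range_succ' (fun m => C (dd n (m-1) * (m:ℝ)) * Qp m) (n+1)]
      simp only [Nat.cast_zero, mul_zero, map_zero, zero_mul, add_zero, Nat.add_sub_cancel]
      apply Finset.sum_congr rfl
      intro m _
      push_cast
      ring_nf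
    have hdd1 : dd n (n+1) = 0 := by rw [dd, cc, if_neg (by omega)]; simp
    have hdd2 : dd n (n+2) = 0 := by rw [dd, cc, if_neg (by omega)]; simp
    have hS2 : ∑ m ∈ range (n+1), C (dd n m * (2*(m:ℝ)+1)) * Qp m
        = ∑ m ∈ range (n+2), C (dd n m * (2*(m:ℝ)+1)) * Qp m := by
      rw [Finset.sum_range_succ (fun m => C (dd n m * (2*(m:ℝ)+1)) * Qp m) (n+1), hdd1]
      simp
    have hS3 : ∑ m ∈ range (n+1), C (dd n m * (m:ℝ)) * Qp (m-1)
        = ∑ m ∈ range (n+2), C (dd n (m+1) * ((m:ℝ)+1)) * Qp m := by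
      rw [Finset.sum_range_succ' (fun m => C (dd n m * (m:ℝ)) * Qp (m-1)) n]
      rw [Finset.sum_range_succ (fun m => C (dd n (m+1) * ((m:ℝ)+1)) * Qp m) (n+1),
          Finset.sum_range_succ (fun m => C (dd n (m+1) * ((m:ℝ)+1)) * Qp m) n]
      rw [show n+1+1 = n+2 from rfl, hdd1, hdd2]
      simp only [Nat.cast_zero, mul_zero, map_zero, zero_mul, add_zero, zero_mul,
        Nat.add_sub_cancel, zero_add]
      apply Finset.sum_congr rfl
      intro m _
      push_cast
      ring_nf
    rw [hS1, hS2, hS3, ← Finset.sum_add_distrib, ← Finset.sum_add_distrib]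
    apply Finset.sum_congr rfl
    intro m hm
    rw [mem_range] at hm
    rw [← add_mul, ← C_add, ← add_mul, ← C_add]
    congr 1
    rw [← cc_succ n m (by omega)]
    ring

lemma coef_eq (n k : ℕ) (hk : k ≤ n) :
    (2 : ℝ) ^ (-(2 * (n : ℤ))) * (2 * ((n : ℝ) - k) + 1) * (n)! *
        (∑ v ∈ (range (k + 1)).filter (fun v => (k - v) % 2 = 0),
          (2 : ℝ) ^ v /
            ((ascPochhammer ℝ (n - (v + k) / 2)).eval (3 / 2 : ℝ) * (v)! * ((k - v) / 2)!))
      = cc n (n-k) := by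
  rw [sumv n k hk, cc, if_pos (by omega : n - k ≤ n)]
  rw [show n-(n-k) = k by omega, show n+(n-k)+1 = 2*n-k+1 by omega, Nat.cast_sub hk]
  have hz : (2:ℝ) ^ (-(2 * (n:ℤ))) = ((2:ℝ) ^ (2*n))⁻¹ := by
    rw [show -(2*(n:ℤ)) = -((2*n : ℕ) : ℤ) by push_cast; ring, zpow_neg, zpow_natCast]
  rw [hz]
  have h1 := fact_cast_ne n
  have h2 := fact_cast_ne k
  have h3 := fact_cast_ne (2*n-k+1)
  have h4 : (2:ℝ)^(2*n) ≠ 0 := by positivity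
  field_simp

theorem monomial_in_shifted_legendre (n : ℕ) :
    (X : ℝ[X]) ^ n =
      ∑ k ∈ range (n + 1),
        C ((2 : ℝ) ^ (-(2 * (n : ℤ))) * (2 * ((n : ℝ) - k) + 1) * n.factorial *
           ∑ v ∈ (range (k + 1)).filter (fun v => (k - v) % 2 = 0),
             (2 : ℝ) ^ v /
               ((ascPochhammer ℝ (n - (v + k) / 2)).eval (3 / 2 : ℝ) *
                v.factorial * ((k - v) / 2).factorial)) *
        (legendreP (n - k)).comp (2 * X - 1) := by
  rw [main_expansion n, ← Finset.sum_range_reflect (fun m => C (cc n m) * Qp m) (n+1)]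
  apply Finset.sum_congr rfl
  intro k hk
  rw [mem_range] at hk
  rw [show n+1-1-k = n-k by omega]
  rw [show (legendreP (n - k)).comp (2 * X - 1) = Qp (n-k) from rfl]
  congr 1
  rw [coef_eq n k (by omega)]
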